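/- Let 0 ≤ α < 1. If f is analytic on the open unit disk D with f(0) = 0, f'(0) = 1, and Re(1 + z f''(z)/f'(z)) < (3 + 2α)/(2 + α) for all z ∈ D, then |f'(z) − 1| < 1 + α for all z ∈ D. -/

import Mathlib

open Complex Metric Set Filter Topology

/-- Jack's lemma, real part: at a point where `‖q‖` attains the value `ρ` that bounds it
on the closed ball of radius `‖z₀‖`, the radial derivative pushes outward. -/
private lemma jack_re_aux (q : ℂ → ℂ) (ρ : ℝ) (z₀ : ℂ) (hr₀ : 0 < ‖z₀‖)
    (hdq : DifferentiableAt ℂ q z₀) (hρ₀ : ‖q z₀‖ = ρ)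
    (hsch : ∀ z : ℂ, ‖z‖ < ‖z₀‖ → ‖q z‖ ≤ ρ / ‖z₀‖ * ‖z‖) :
    ρ ^ 2 ≤ ((starRingEnd ℂ) (q z₀) * (deriv q z₀ * z₀)).re := by
  set c : ℂ := (starRingEnd ℂ) (q z₀) * (deriv q z₀ * z₀) with hc
  have hg : HasDerivAt (fun w : ℂ => (starRingEnd ℂ) (q z₀) * q (w * z₀)) c 1 := by
    have hinner : HasDerivAt (fun w : ℂ => w * z₀) z₀ 1 := by
      simpa using (hasDerivAt_id (1:ℂ)).mul_const z₀
    have hq' : HasDerivAt q (deriv q z₀) ((1:ℂ) * z₀) := by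
      rw [one_mul]; exact hdq.hasDerivAt
    have := (hq'.comp (1:ℂ) hinner).const_mul ((starRingEnd ℂ) (q z₀))
    simpa [Function.comp, hc] using this
  have hF : HasDerivAt (fun t : ℝ => ((starRingEnd ℂ) (q z₀) * q ((t:ℂ) * z₀)).re) c.re 1 := by
    have h1 : HasDerivAt (fun t : ℝ => (starRingEnd ℂ) (q z₀) * q ((t:ℂ) * z₀)) c 1 :=
      hg.comp_ofReal
    exact Complex.reCLM.hasFDerivAt.comp_hasDerivAt 1 h1
  set F : ℝ → ℝ := fun t => ((starRingEnd ℂ) (q z₀) * q ((t:ℂ) * z₀)).re with hFdef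
  have hF1 : F 1 = ρ ^ 2 := by
    simp only [hFdef, Complex.ofReal_one, one_mul]
    have h0 : (starRingEnd ℂ) (q z₀) * q z₀ = ((ρ ^ 2 : ℝ) : ℂ) := by
      rw [mul_comm, Complex.mul_conj, Complex.normSq_eq_norm_sq, hρ₀]
    rw [h0, Complex.ofReal_re]
  have hFle : ∀ t ∈ Set.Ioo (0:ℝ) 1, F t ≤ t * ρ ^ 2 := by
    intro t ht
    have h1 : ‖(t:ℂ) * z₀‖ < ‖z₀‖ := by
      rw [norm_mul, Complex.norm_real, Real.norm_eq_abs, abs_of_pos ht.1]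
      nlinarith [ht.2, hr₀]
    have h2 := hsch _ h1
    have hρ0' : 0 ≤ ρ := by
      rw [← hρ₀]; exact norm_nonneg _
    calc F t ≤ ‖(starRingEnd ℂ) (q z₀) * q ((t:ℂ) * z₀)‖ := Complex.re_le_norm _
      _ = ρ * ‖q ((t:ℂ) * z₀)‖ := by
          rw [norm_mul, Complex.norm_conj, hρ₀]
      _ ≤ ρ * (ρ / ‖z₀‖ * ‖(t:ℂ) * z₀‖) := by nlinarith
      _ = t * ρ ^ 2 := by
          rw [norm_mul, Complex.norm_real, Real.norm_eq_abs, abs_of_pos ht.1]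
          have hnz : ‖z₀‖ ≠ 0 := by
            exact hr₀.ne'
          have h4 : ρ / ‖z₀‖ * (t * ‖z₀‖) = t * ρ := by
            field_simp [hnz]
          rw [h4]; ring
  have hslope : Tendsto (slope F 1) (𝓝[<] (1:ℝ)) (𝓝 c.re) :=
    (hasDerivAt_iff_tendsto_slope.1 hF).mono_left
      (nhdsWithin_mono _ (fun x hx => ne_of_lt hx))
  refine ge_of_tendsto hslope ?_
  filter_upwards [Ioo_mem_nhdsLT zero_lt_one] with t ht
  have h1 : t - 1 < 0 := by linarith [ht.2]
  have h2 : F t ≤ t * ρ ^ 2 := hFle t ht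
  rw [slope_def_field, le_div_iff_of_neg h1, hF1]
  nlinarith

/-- Jack's lemma, imaginary part: the tangential derivative of `‖q‖²` vanishes at the
maximum point on the circle. -/
private lemma jack_im_aux (q : ℂ → ℂ) (ρ : ℝ) (z₀ : ℂ)
    (hdq : DifferentiableAt ℂ q z₀) (hρ₀ : ‖q z₀‖ = ρ)
    (hcb : ∀ z : ℂ, ‖z‖ ≤ ‖z₀‖ → ‖q z‖ ≤ ρ) :
    ((starRingEnd ℂ) (q z₀) * (deriv q z₀ * z₀)).im = 0 := by
  set A : ℂ := deriv q z₀ * z₀ with hA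
  have hM : HasDerivAt (fun w : ℂ => q (Complex.exp (w * I) * z₀)) (deriv q z₀ * (I * z₀)) 0 := by
    have h1 : HasDerivAt (fun w : ℂ => w * I) I 0 := by
      simpa using (hasDerivAt_id (0:ℂ)).mul_const I
    have h2 : HasDerivAt (fun w : ℂ => Complex.exp (w * I)) I 0 := by
      have := h1.cexp
      simpa using this
    have h3 : HasDerivAt (fun w : ℂ => Complex.exp (w * I) * z₀) (I * z₀) 0 := by
      simpa using h2.mul_const z₀
    have hq' : HasDerivAt q (deriv q z₀) (Complex.exp ((0:ℂ) * I) * z₀) := by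
      rw [zero_mul, Complex.exp_zero, one_mul]; exact hdq.hasDerivAt
    exact hq'.comp (0:ℂ) h3
  have hu : HasDerivAt (fun θ : ℝ => q (Complex.exp ((θ:ℂ) * I) * z₀)) (deriv q z₀ * (I * z₀)) 0 :=
    hM.comp_ofReal
  set u : ℝ → ℂ := fun θ => q (Complex.exp ((θ:ℂ) * I) * z₀) with hudef
  set u' : ℂ := deriv q z₀ * (I * z₀) with hu'def
  have hv : HasDerivAt (fun θ : ℝ => (starRingEnd ℂ) (u θ)) ((starRingEnd ℂ) u') 0 :=
    Complex.conjCLE.hasFDerivAt.comp_hasDerivAt 0 hu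
  have hG : HasDerivAt (fun θ : ℝ => ((starRingEnd ℂ) (u θ) * u θ).re)
      ((starRingEnd ℂ) u' * u 0 + (starRingEnd ℂ) (u 0) * u').re 0 :=
    Complex.reCLM.hasFDerivAt.comp_hasDerivAt 0 (hv.mul hu)
  have hu0 : u 0 = q z₀ := by
    simp [hudef]
  have hmax : IsLocalMax (fun θ : ℝ => ((starRingEnd ℂ) (u θ) * u θ).re) 0 := by
    apply Filter.Eventually.of_forall
    intro θ
    have h1 : ‖Complex.exp ((θ:ℂ) * I) * z₀‖ ≤ ‖z₀‖ := by
      rw [norm_mul, Complex.norm_exp_ofReal_mul_I, one_mul]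
    have h2 : ‖u θ‖ ≤ ρ := hcb _ h1
    have e1 : ∀ w : ℂ, ((starRingEnd ℂ) w * w).re = ‖w‖ ^ 2 := by
      intro w
      rw [mul_comm, Complex.mul_conj, Complex.normSq_eq_norm_sq,
        Complex.ofReal_re]
    simp only [e1, hu0]
    rw [hρ₀]
    nlinarith [norm_nonneg (u θ)]
  have hzero := hmax.hasDerivAt_eq_zero hG
  have key : ((starRingEnd ℂ) u' * u 0 + (starRingEnd ℂ) (u 0) * u').re
      = -2 * ((starRingEnd ℂ) (q z₀) * A).im := by
    rw [hu0, hu'def, hA]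
    simp only [Complex.add_re, Complex.mul_re, Complex.mul_im, Complex.conj_re, Complex.conj_im,
      Complex.I_re, Complex.I_im]
    ring
  rw [key] at hzero
  linarith

/-- The final elementary estimate at the contact point. -/
private lemma final_aux (α : ℝ) (hα0 : 0 ≤ α) (q₀ A : ℂ)
    (hD : 1 + q₀ ≠ 0)
    (hρ₀ : ‖q₀‖ = 1 + α)
    (him : ((starRingEnd ℂ) q₀ * A).im = 0)
    (hre2 : (1 + α) ^ 2 ≤ ((starRingEnd ℂ) q₀ * A).re) :
    (3 + 2 * α) / (2 + α) ≤ (1 + A / (1 + q₀)).re := by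
  set ρ : ℝ := 1 + α with hρ
  have hρ0 : 0 < ρ := by positivity
  set c : ℂ := (starRingEnd ℂ) q₀ * A with hc
  have hq₀ne : q₀ ≠ 0 := by
    intro h; rw [h, norm_zero] at hρ₀; simp only [hρ] at hρ₀; linarith
  set d : ℝ := c.re / ρ ^ 2 with hd
  have hd1 : 1 ≤ d := by
    rw [hd, le_div_iff₀ (by positivity)]
    simpa using hre2
  have hnq : Complex.normSq q₀ = ρ ^ 2 := by
    rw [Complex.normSq_eq_norm_sq, hρ₀]
  have hρc : ((ρ ^ 2 : ℝ) : ℂ) ≠ 0 := by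
    rw [Complex.ofReal_ne_zero]; positivity
  have hA : A = (d : ℂ) * q₀ := by
    have h1 : c = ((c.re : ℝ) : ℂ) := by
      apply Complex.ext <;> simp [him]
    have h2 : q₀ * c = ((ρ ^ 2 : ℝ) : ℂ) * A := by
      rw [hc, ← mul_assoc, Complex.mul_conj, hnq]
    have h3 : A = q₀ * c / ((ρ ^ 2 : ℝ) : ℂ) := by
      rw [h2, mul_div_cancel_left₀ A hρc]
    rw [h3, h1, hd]
    push_cast
    field_simp
  have hx : q₀.re ≤ ρ := by
    rw [← hρ₀]
    exact Complex.re_le_norm q₀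
  have hsq : q₀.re ^ 2 + q₀.im ^ 2 = ρ ^ 2 := by
    rw [← hnq, Complex.normSq_apply]; ring
  have hns : 0 < Complex.normSq (1 + q₀) := Complex.normSq_pos.2 hD
  have hden : Complex.normSq (1 + q₀) = (1 + q₀.re) ^ 2 + q₀.im ^ 2 := by
    rw [Complex.normSq_apply]; simp; ring
  have hQD : (1 + α) / (2 + α) ≤ (q₀ / (1 + q₀)).re := by
    rw [Complex.div_re, ← add_div, div_le_div_iff₀ (by linarith : (0:ℝ) < 2 + α) hns]
    simp only [Complex.add_re, Complex.add_im, Complex.one_re, Complex.one_im]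
    rw [hden]
    nlinarith [hsq, hx, hα0]
  have hgoal : (3 + 2 * α) / (2 + α) = 1 + (1 + α) / (2 + α) := by
    field_simp
    ring
  rw [hgoal, hA, mul_div_assoc, Complex.add_re, Complex.one_re, Complex.re_ofReal_mul]
  have hβ0 : 0 ≤ (1 + α) / (2 + α) := div_nonneg (by linarith) (by linarith)
  nlinarith [hQD, hd1]

theorem stmt_6 (α : ℝ) (hα0 : 0 ≤ α) (hα1 : α < 1)
    (f : ℂ → ℂ) (hf : DifferentiableOn ℂ f (ball 0 1))
    (hf0 : f 0 = 0) (hf'0 : deriv f 0 = 1)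
    (hf'ne : ∀ z ∈ ball (0:ℂ) 1, deriv f z ≠ 0)
    (hre : ∀ z ∈ ball (0:ℂ) 1,
      (1 + z * deriv (deriv f) z / deriv f z).re < (3 + 2 * α) / (2 + α)) :
    ∀ z ∈ ball (0:ℂ) 1, ‖deriv f z - 1‖ < 1 + α := by
  classical
  set ρ : ℝ := 1 + α with hρdef
  have hρ0 : 0 < ρ := by positivity
  set q : ℂ → ℂ := fun z => deriv f z - 1 with hqdef
  have hfa : AnalyticOnNhd ℂ f (ball 0 1) := hf.analyticOnNhd isOpen_ball
  have hdf : AnalyticOnNhd ℂ (deriv f) (ball 0 1) := hfa.deriv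
  have hqd : DifferentiableOn ℂ q (ball 0 1) := fun z hz =>
    (((hdf z hz).differentiableAt).sub_const 1).differentiableWithinAt
  have hqc : ContinuousOn q (ball 0 1) := hqd.continuousOn
  have hq0 : q 0 = 0 := by simp [hqdef, hf'0]
  by_contra hcon
  push_neg at hcon
  obtain ⟨z₁, hz₁, hge⟩ := hcon
  have hz₁n : ‖z₁‖ < 1 := by simpa [mem_ball, dist_zero_right] using hz₁
  have hge' : ρ ≤ ‖q z₁‖ := by
    simpa [hqdef] using hge
  -- first contact point
  obtain ⟨z₀, hz₀le, hr₀, hz₀ρ, hint⟩ :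
      ∃ z₀, ‖z₀‖ ≤ ‖z₁‖ ∧ 0 < ‖z₀‖ ∧ ρ ≤ ‖q z₀‖ ∧
        (∀ z : ℂ, ‖z‖ < ‖z₀‖ → ‖q z‖ < ρ) := by
    set S := closedBall (0:ℂ) ‖z₁‖ with hS
    have hSsub : S ⊆ ball (0:ℂ) 1 := closedBall_subset_ball hz₁n
    have hScpt : IsCompact S := isCompact_closedBall _ _
    set K := S ∩ (fun z => ‖q z‖) ⁻¹' Ici ρ with hK
    have hKcl : IsClosed K :=
      ContinuousOn.preimage_isClosed_of_isClosed ((hqc.mono hSsub).norm)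
        Metric.isClosed_closedBall isClosed_Ici
    have hKcpt : IsCompact K := hScpt.of_isClosed_subset hKcl inter_subset_left
    have hKne : K.Nonempty := ⟨z₁, by
      simp only [hK, mem_inter_iff, hS, mem_closedBall, dist_zero_right, mem_preimage, mem_Ici]
      exact ⟨le_rfl, hge'⟩⟩
    obtain ⟨z₀, hz₀K, hz₀min⟩ := hKcpt.exists_isMinOn hKne continuous_norm.continuousOn
    obtain ⟨hz₀S, hz₀ρ⟩ := hz₀K
    refine ⟨z₀, by simpa [hS, mem_closedBall, dist_zero_right] using hz₀S, ?_, hz₀ρ, ?_⟩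
    · rcases eq_or_ne z₀ 0 with rfl | h
      · exfalso; have : ρ ≤ ‖q 0‖ := hz₀ρ; rw [hq0] at this; simp at this; linarith
      · simpa using h
    · intro z hz
      by_contra hle
      push_neg at hle
      have hzK : z ∈ K := ⟨by
        simp only [hS, mem_closedBall, dist_zero_right]
        calc ‖z‖ ≤ ‖z₀‖ := hz.le
          _ ≤ ‖z₁‖ := by simpa [hS, mem_closedBall, dist_zero_right] using hz₀S,
        by simpa [mem_preimage, mem_Ici] using hle⟩
      exact absurd (hz₀min hzK) (by simpa using hz)
  have hr₁ : ‖z₀‖ < 1 := lt_of_le_of_lt hz₀le hz₁n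
  have hz₀mem : z₀ ∈ ball (0:ℂ) 1 := by
    simp only [mem_ball, dist_zero_right]; exact hr₁
  -- bound on the closed ball
  have hcb : ∀ z : ℂ, ‖z‖ ≤ ‖z₀‖ → ‖q z‖ ≤ ρ := by
    intro z hz
    rcases lt_or_eq_of_le hz with h | h
    · exact (hint z h).le
    have hzball : z ∈ ball (0:ℂ) 1 := by
      simp only [mem_ball, dist_zero_right]; linarith
    have hcont : ContinuousAt q z := hqc.continuousAt (isOpen_ball.mem_nhds hzball)
    have hmul : Tendsto (fun t : ℝ => ((t:ℂ) * z)) (𝓝[<] 1) (𝓝 z) := by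
      have h1 : Tendsto (fun t : ℝ => ((t:ℂ) * z)) (𝓝 1) (𝓝 z) := by
        have := (Complex.continuous_ofReal.tendsto 1).mul_const z
        simpa using this
      exact h1.mono_left nhdsWithin_le_nhds
    have htend : Tendsto (fun t : ℝ => ‖q ((t:ℂ) * z)‖) (𝓝[<] 1) (𝓝 ‖q z‖) :=
      (hcont.tendsto.comp hmul).norm
    refine le_of_tendsto htend ?_
    filter_upwards [Ioo_mem_nhdsLT zero_lt_one] with t ht
    have h2 : ‖(t:ℂ) * z‖ < ‖z₀‖ := by
      rw [norm_mul, Complex.norm_real, Real.norm_eq_abs, abs_of_pos ht.1, ← h]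
      nlinarith [ht.2, hr₀, h ▸ hr₀]
    exact (hint _ h2).le
  have hρ₀ : ‖q z₀‖ = ρ := le_antisymm (hcb z₀ le_rfl) hz₀ρ
  -- Schwarz bound
  have hsch : ∀ z : ℂ, ‖z‖ < ‖z₀‖ → ‖q z‖ ≤ ρ / ‖z₀‖ * ‖z‖ := by
    intro z hz
    have hd : DifferentiableOn ℂ q (ball 0 ‖z₀‖) := hqd.mono (ball_subset_ball hr₁.le)
    have hmaps : MapsTo q (ball 0 ‖z₀‖) (ball (q 0) ρ) := by
      intro w hw
      rw [hq0, mem_ball, dist_zero_right]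
      exact hint w (by simpa [mem_ball, dist_zero_right] using hw)
    have := Complex.dist_le_div_mul_dist_of_mapsTo_ball hd (hmaps.mono_right ball_subset_closedBall)
      (z := z) (by simpa [mem_ball, dist_zero_right] using hz)
    simpa [hq0, dist_zero_right] using this
  -- Jack's lemma at z₀
  have hdq : DifferentiableAt ℂ q z₀ := ((hdf z₀ hz₀mem).differentiableAt).sub_const 1
  have hre2 : ρ ^ 2 ≤ ((starRingEnd ℂ) (q z₀) * (deriv q z₀ * z₀)).re :=
    jack_re_aux q ρ z₀ hr₀ hdq hρ₀ hsch
  have him : ((starRingEnd ℂ) (q z₀) * (deriv q z₀ * z₀)).im = 0 :=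
    jack_im_aux q ρ z₀ hdq hρ₀ hcb
  -- final contradiction
  have hD : (1 : ℂ) + q z₀ ≠ 0 := by
    have := hf'ne z₀ hz₀mem
    intro h
    apply this
    have : deriv f z₀ = 1 + q z₀ := by rw [hqdef]; ring
    rw [this, h]
  have hfinal := final_aux α hα0 (q z₀) (deriv q z₀ * z₀) hD (by rw [hρ₀, hρdef]) him
    (by rw [← hρdef]; exact hre2)
  have hrez := hre z₀ hz₀mem
  have e1 : deriv q z₀ = deriv (deriv f) z₀ := by
    rw [hqdef]; exact deriv_sub_const 1
  have e2 : deriv f z₀ = 1 + q z₀ := by rw [hqdef]; ring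
  rw [e2, show z₀ * deriv (deriv f) z₀ = deriv q z₀ * z₀ by rw [e1]; ring] at hrez
  linarith
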